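/- Let N ≤ M and suppose π ∈ S_M is such that every cycle of π contains at most one element greater than N. Then π is uniquely determined by its restriction to {1,...,N} together with the requirement that every element i > N not in π({1,...,N}) is a fixed point. -/
import Mathlib


/-- A configuration is uniquely determined by its restriction to `{1,…,N}` together
with the requirements that each cycle contains at most one element of value greater
than `N` and that every element `i > N` not in the image of `{1,…,N}` is fixed.
(In `Fin M`, the elements of value greater than `N` are those with `N ≤ i.val`.) -/
theorem configuration_unique_extension (N M : ℕ) (hNM : N ≤ M)
    (π π' : Equiv.Perm (Fin M))
    (hcyc : ∀ i j : Fin M, π.SameCycle i j → N ≤ i.val → N ≤ j.val → i = j)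
    (hcyc' : ∀ i j : Fin M, π'.SameCycle i j → N ≤ i.val → N ≤ j.val → i = j)
    (hfix : ∀ i : Fin M, N ≤ i.val → (∀ j : Fin M, j.val < N → π j ≠ i) → π i = i)
    (hfix' : ∀ i : Fin M, N ≤ i.val → (∀ j : Fin M, j.val < N → π' j ≠ i) → π' i = i)
    (hagree : ∀ j : Fin M, j.val < N → π j = π' j) :
    π = π' := by
  ext i
  by_cases hiN : i.val < N
  · exact congrArg Fin.val (hagree i hiN)
  push_neg at hiN
  by_cases hj : ∃ j : Fin M, j.val < N ∧ π j = i
  · obtain ⟨j, hjN, hji⟩ := hj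
    have hji' : π' j = i := by rw [← hagree j hjN]; exact hji
    have hij : j ≠ i := by
      intro h; rw [h] at hjN; omega
    -- periodicity facts
    have hperX : ∀ σ : Equiv.Perm (Fin M), i ∈ Function.periodicPts ⇑σ := by
      intro σ
      exact ⟨orderOf σ, orderOf_pos σ, by
        simp only [Function.IsPeriodicPt, Function.IsFixedPt,
          Equiv.Perm.iterate_eq_pow, pow_orderOf_eq_one, Equiv.Perm.coe_one, id_eq]⟩
    set m' := Function.minimalPeriod (⇑π') i with hm'def
    have hpos' : 0 < m' := Function.minimalPeriod_pos_of_mem_periodicPts (hperX π')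
    have hper' : (π' ^ m') i = i := by
      have := Function.isPeriodicPt_minimalPeriod (⇑π') i
      rwa [Function.IsPeriodicPt, Function.IsFixedPt, Equiv.Perm.iterate_eq_pow] at this
    -- elements strictly inside the π'-cycle of i are < N
    have hsmall' : ∀ k, 1 ≤ k → k < m' → ((π' ^ k) i).val < N := by
      intro k hk1 hkm
      have hne : (π' ^ k) i ≠ i := by
        intro h
        have hp : Function.IsPeriodicPt (⇑π') k i := by
          rw [Function.IsPeriodicPt, Function.IsFixedPt, Equiv.Perm.iterate_eq_pow]; exact h
        have := Function.IsPeriodicPt.minimalPeriod_le (by omega) hp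
        omega
      by_contra hge
      push_neg at hge
      exact hne (hcyc' _ i ⟨-(k:ℤ), by simp⟩ hge hiN)
    -- the chain: π follows π' inside the cycle
    have chain : ∀ k, 1 ≤ k → k ≤ m' → (π ^ (k - 1)) (π' i) = (π' ^ k) i := by
      intro k
      induction k with
      | zero => omega
      | succ k ih =>
        intro _ hk
        rcases Nat.eq_zero_or_pos k with hk0 | hk1
        · subst hk0; simp
        · have ih' := ih hk1 (by omega)
          have hkN : ((π' ^ k) i).val < N := hsmall' k hk1 (by omega)
          have hstep : π ((π' ^ k) i) = (π' ^ (k + 1)) i := by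
            rw [hagree _ hkN, ← Equiv.Perm.mul_apply, ← pow_succ']
          calc (π ^ (k + 1 - 1)) (π' i) = π ((π ^ (k - 1)) (π' i)) := by
                have : k + 1 - 1 = (k - 1) + 1 := by omega
                rw [this, pow_succ', Equiv.Perm.mul_apply]
            _ = (π' ^ (k + 1)) i := by rw [ih', hstep]
    have hL : (π ^ (m' - 1)) (π' i) = i := by
      have := chain m' hpos' le_rfl
      rw [this, hper']
    -- hence π' i lies in the π-cycle of i
    have hsc0 : π.SameCycle (π' i) i := ⟨(m' - 1 : ℕ), by simpa using hL⟩
    have hsc : π.SameCycle i (π' i) := Equiv.Perm.SameCycle.symm hsc0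
    obtain ⟨k, hk, hki⟩ := Equiv.Perm.SameCycle.exists_pow_eq' hsc
    set m := Function.minimalPeriod (⇑π) i with hmdef
    have hpos : 0 < m := Function.minimalPeriod_pos_of_mem_periodicPts (hperX π)
    have hk' : (π ^ (k % m)) i = π' i := by
      have := Function.iterate_mod_minimalPeriod_eq (f := ⇑π) (x := i) (n := k)
      rw [Equiv.Perm.iterate_eq_pow, Equiv.Perm.iterate_eq_pow] at this
      rw [← hmdef] at this
      rw [this]; exact hki
    have hkm : k % m < m := Nat.mod_lt _ hpos
    set k' := k % m with hk'def
    have hcases : k' = 0 ∨ k' = 1 ∨ 2 ≤ k' := by omega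
    rcases hcases with h0 | h1 | h2
    · -- then π' i = i, contradicting injectivity with π' j = i
      rw [h0, pow_zero] at hk'
      simp only [Equiv.Perm.coe_one, id_eq] at hk'
      exact absurd (π'.injective (hji'.trans hk')) hij
    · rw [h1, pow_one] at hk'
      exact congrArg Fin.val hk'
    · exfalso
      set x := (π ^ (k' - 1)) i with hxdef
      have hxne : x ≠ i := by
        intro h
        have hp : Function.IsPeriodicPt (⇑π) (k' - 1) i := by
          rw [Function.IsPeriodicPt, Function.IsFixedPt, Equiv.Perm.iterate_eq_pow]
          exact h
        have := Function.IsPeriodicPt.minimalPeriod_le (by omega) hp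
        omega
      have hxlt : x.val < N := by
        by_contra hge
        push_neg at hge
        exact hxne (hcyc x i ⟨-((k' - 1 : ℕ) : ℤ), by simp [hxdef]⟩ hge hiN)
      have hpx : π x = π' i := by
        rw [hxdef, ← Equiv.Perm.mul_apply, ← pow_succ']
        have : k' - 1 + 1 = k' := by omega
        rw [this]; exact hk'
      have : π' x = π' i := by rw [← hagree x hxlt]; exact hpx
      exact hxne (π'.injective this)
  · push_neg at hj
    have h1 : π i = i := hfix i hiN hj
    have h2 : π' i = i := hfix' i hiN (fun k hk => by rw [← hagree k hk]; exact hj k hk)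
    rw [h1, h2]
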